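/- Let f₁, f₂ : ℝⁿ → ℝ be convex functions and f = f₁ − f₂. Suppose x̄ ∈ ℝⁿ is a local minimizer of f but not a global minimizer, ε̄ > 0, ξ̄₂ ∈ ∂_ε̄ f₂(x̄) and ξ̄₂ ∉ ∂_ε̄ f₁(x̄). Define f̂(y) = f₁(y) − (f₂(x̄) + ⟨ξ̄₂, y − x̄⟩ − ε̄) for y ∈ ℝⁿ. Then f̂ is an overestimate of f, i.e., f(y) ≤ f̂(y) for all y ∈ ℝⁿ, and x̄ is not a global minimizer of f̂, i.e., there exists y ∈ ℝⁿ with f̂(y) < f̂(x̄). -/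
import Mathlib

open scoped RealInnerProductSpace

/-- The ε-subdifferential of `g` at `x`. -/
def epsSubdiff {n : ℕ} (g : EuclideanSpace ℝ (Fin n) → ℝ) (ε : ℝ)
    (x : EuclideanSpace ℝ (Fin n)) : Set (EuclideanSpace ℝ (Fin n)) :=
  {ξ | ∀ y, g y ≥ g x + ⟪ξ, y - x⟫ - ε}

/-- The subdifferential of `g` at `x`. -/
def subdiff {n : ℕ} (g : EuclideanSpace ℝ (Fin n) → ℝ)
    (x : EuclideanSpace ℝ (Fin n)) : Set (EuclideanSpace ℝ (Fin n)) :=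
  {ξ | ∀ y, g y ≥ g x + ⟪ξ, y - x⟫}

/-- The t-spherical subdifferential of `g` at `x`. -/
def sphSubdiff {n : ℕ} (g : EuclideanSpace ℝ (Fin n) → ℝ) (t : ℝ)
    (x : EuclideanSpace ℝ (Fin n)) : Set (EuclideanSpace ℝ (Fin n)) :=
  convexHull ℝ {ξ | ∃ d : EuclideanSpace ℝ (Fin n), ‖d‖ = 1 ∧ ξ ∈ subdiff g (x + t • d)}

theorem fhat_overestimates_and_escapes {n : ℕ}
    (f₁ f₂ f : EuclideanSpace ℝ (Fin n) → ℝ)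
    (h₁ : ConvexOn ℝ Set.univ f₁) (h₂ : ConvexOn ℝ Set.univ f₂)
    (hf : ∀ x, f x = f₁ x - f₂ x)
    (xbar : EuclideanSpace ℝ (Fin n))
    (hloc : ∃ U : Set (EuclideanSpace ℝ (Fin n)),
      IsOpen U ∧ xbar ∈ U ∧ ∀ y ∈ U, f xbar ≤ f y)
    (hnotglob : ¬ (∀ y, f xbar ≤ f y))
    (εbar : ℝ) (hεbar : 0 < εbar)
    (ξbar₂ : EuclideanSpace ℝ (Fin n))
    (hξ₂ : ξbar₂ ∈ epsSubdiff f₂ εbar xbar)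
    (hξ₂' : ξbar₂ ∉ epsSubdiff f₁ εbar xbar)
    (fhat : EuclideanSpace ℝ (Fin n) → ℝ)
    (hfhat : ∀ y, fhat y = f₁ y - (f₂ xbar + ⟪ξbar₂, y - xbar⟫ - εbar)) :
    (∀ y, f y ≤ fhat y) ∧ (∃ y, fhat y < fhat xbar) := by
  constructor
  · intro y
    have h := hξ₂ y
    rw [hf, hfhat]
    linarith
  · simp only [epsSubdiff, Set.mem_setOf_eq, not_forall, not_le] at hξ₂'
    obtain ⟨y, hy⟩ := hξ₂'
    refine ⟨y, ?_⟩
    have hx : fhat xbar = f₁ xbar - f₂ xbar + εbar := by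
      rw [hfhat]; simp; ring
    rw [hfhat y, hx]
    linarith
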